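/- For n ∈ ℕ with n ≥ 1 and t ∈ [0,1], letting S_{n,-1}(t) = ∑_{k=0}^n (C(n,k) t^k (1-t)^{n-k})², one has S_{n,-1}(t) = (1/π) ∫_0^1 (x + (1-x)(1-2t)²)^n dx/√(x(1-x)). -/

import Mathlib

set_option maxHeartbeats 1000000
open MeasureTheory intervalIntegral Finset Set Complex

lemma cos_int (k j : ℕ) :
    ∫ u in (0:ℝ)..Real.pi, Real.cos ((k:ℝ)*u - (j:ℝ)*u) = if k = j then Real.pi else 0 := by
  rcases eq_or_ne k j with h | h
  · simp [h]
  · have hm : (k:ℝ) - j ≠ 0 := sub_ne_zero.mpr (by exact_mod_cast Nat.cast_injective.ne h)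
    rw [if_neg h]
    have h1 : ∀ u:ℝ, (k:ℝ)*u - (j:ℝ)*u = ((k:ℝ)-j)*u := fun u => by ring
    simp_rw [h1]
    rw [intervalIntegral.integral_comp_mul_left (fun u => Real.cos u) hm]
    have : Real.sin (((k:ℝ)-j) * Real.pi) = 0 := by
      have : ((k:ℝ)-j) * Real.pi = ((k:ℤ)-j : ℤ) * Real.pi := by push_cast; ring
      rw [this, Real.sin_int_mul_pi]
    simp [this]

lemma pointwise_id (n : ℕ) (t u : ℝ) :
    ((t^2 + (1-t)^2) - 2*t*(1-t)*Real.cos u)^n =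
      ∑ k ∈ range (n+1), ∑ j ∈ range (n+1),
        (((n.choose k : ℝ) * (1-t)^(n-k) * (-t)^k) * ((n.choose j : ℝ) * (1-t)^(n-j) * (-t)^j))
          * Real.cos ((k:ℝ)*u - (j:ℝ)*u) := by
  set e : ℂ := Complex.exp (u * I) with he
  set z : ℂ := (1-t : ℝ) + (-t : ℝ) * e with hzdef
  have hce : (starRingEnd ℂ) e = Complex.exp (-(u * I)) := by
    rw [he, ← Complex.exp_conj]
    congr 1
    simp [Complex.conj_I]
  have hbase : (t^2 + (1-t)^2) - 2*t*(1-t)*Real.cos u = Complex.normSq z := by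
    have hre : z.re = (1-t) + (-t) * Real.cos u := by
      simp [hzdef, he, Complex.exp_ofReal_mul_I_re]
    have him : z.im = (-t) * Real.sin u := by
      simp [hzdef, he, Complex.exp_ofReal_mul_I_im]
    rw [Complex.normSq_apply, hre, him]
    nlinarith [Real.sin_sq_add_cos_sq u]
  have hz : ((((t^2 + (1-t)^2) - 2*t*(1-t)*Real.cos u)^n : ℝ) : ℂ)
      = z^n * (starRingEnd ℂ) (z^n) := by
    rw [hbase]
    push_cast
    rw [← Complex.mul_conj, mul_pow, ← map_pow]
  have hzn : z^n = ∑ k ∈ range (n+1),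
      ((-t:ℂ) * e)^k * ((1-t:ℂ))^(n-k) * (n.choose k : ℂ) := by
    rw [hzdef, add_comm]
    push_cast
    exact add_pow _ _ n
  have hczn : (starRingEnd ℂ) (z^n) = ∑ j ∈ range (n+1),
      ((-t:ℂ) * Complex.exp (-(u*I)))^j * ((1-t:ℂ))^(n-j) * (n.choose j : ℂ) := by
    rw [hzn, map_sum]
    refine Finset.sum_congr rfl fun j _ => ?_
    simp [hce, map_pow]
  have key : ((((t^2 + (1-t)^2) - 2*t*(1-t)*Real.cos u)^n : ℝ) : ℂ)
      = ∑ k ∈ range (n+1), ∑ j ∈ range (n+1),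
        ((((n.choose k : ℝ) * (1-t)^(n-k) * (-t)^k) * ((n.choose j : ℝ) * (1-t)^(n-j) * (-t)^j) : ℝ) : ℂ)
          * Complex.exp ((((k:ℝ)*u - (j:ℝ)*u : ℝ)) * I) := by
    rw [hz, hczn, hzn, Finset.sum_mul_sum]
    refine Finset.sum_congr rfl fun k _ => Finset.sum_congr rfl fun j _ => ?_
    have hek : e^k = Complex.exp ((k : ℂ) * (u * I)) := by
      rw [he, ← Complex.exp_nat_mul]
    have hej : (Complex.exp (-(u*I)))^j = Complex.exp ((j : ℂ) * (-(u * I))) := by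
      rw [← Complex.exp_nat_mul]
    rw [mul_pow, mul_pow, hek, hej]
    rw [show ((((k:ℝ)*u - (j:ℝ)*u : ℝ)) : ℂ) * I = (k : ℂ) * (u * I) + (j : ℂ) * (-(u * I)) by push_cast; ring,
      Complex.exp_add]
    push_cast
    ring
  have h2 := congrArg Complex.re key
  simp only [Complex.ofReal_re, Complex.re_sum, Complex.re_ofReal_mul,
    Complex.exp_ofReal_mul_I_re] at h2
  exact h2

lemma int_pi (n : ℕ) (t : ℝ) :
    ∫ u in (0:ℝ)..Real.pi, ((t^2 + (1-t)^2) - 2*t*(1-t)*Real.cos u)^n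
      = Real.pi * ∑ k ∈ range (n+1), ((n.choose k : ℝ) * t^k * (1-t)^(n-k))^2 := by
  have hcont : ∀ (c : ℝ) (k j : ℕ), IntervalIntegrable
      (fun u => c * Real.cos ((k:ℝ)*u - (j:ℝ)*u)) volume 0 Real.pi := by
    intro c k j
    exact (continuous_const.mul (Real.continuous_cos.comp
      ((continuous_const.mul continuous_id).sub (continuous_const.mul continuous_id)))).intervalIntegrable _ _
  simp_rw [pointwise_id n t]
  have hint : ∀ k ∈ range (n+1), IntervalIntegrable (fun u => ∑ j ∈ range (n+1),
      (((n.choose k : ℝ) * (1-t)^(n-k) * (-t)^k) * ((n.choose j : ℝ) * (1-t)^(n-j) * (-t)^j))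
        * Real.cos ((k:ℝ)*u - (j:ℝ)*u)) volume 0 Real.pi := by
    intro k _
    apply Continuous.intervalIntegrable
    exact continuous_finset_sum _ (fun j _ => continuous_const.mul (Real.continuous_cos.comp
      ((continuous_const.mul continuous_id).sub (continuous_const.mul continuous_id))))
  rw [intervalIntegral.integral_finset_sum hint]
  have h1 : ∀ k ∈ range (n+1),
      (∫ u in (0:ℝ)..Real.pi, ∑ j ∈ range (n+1),
        (((n.choose k : ℝ) * (1-t)^(n-k) * (-t)^k) * ((n.choose j : ℝ) * (1-t)^(n-j) * (-t)^j))
          * Real.cos ((k:ℝ)*u - (j:ℝ)*u))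
      = ((n.choose k : ℝ) * t^k * (1-t)^(n-k))^2 * Real.pi := by
    intro k hk
    have hint2 : ∀ j ∈ range (n+1), IntervalIntegrable (fun u =>
        (((n.choose k : ℝ) * (1-t)^(n-k) * (-t)^k) * ((n.choose j : ℝ) * (1-t)^(n-j) * (-t)^j))
          * Real.cos ((k:ℝ)*u - (j:ℝ)*u)) volume 0 Real.pi := fun j _ => hcont _ k j
    rw [intervalIntegral.integral_finset_sum hint2]
    have h2 : ∀ j ∈ range (n+1),
        (∫ u in (0:ℝ)..Real.pi,
          (((n.choose k : ℝ) * (1-t)^(n-k) * (-t)^k) * ((n.choose j : ℝ) * (1-t)^(n-j) * (-t)^j))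
            * Real.cos ((k:ℝ)*u - (j:ℝ)*u))
        = (((n.choose k : ℝ) * (1-t)^(n-k) * (-t)^k) * ((n.choose j : ℝ) * (1-t)^(n-j) * (-t)^j))
            * (if k = j then Real.pi else 0) := by
      intro j _
      rw [intervalIntegral.integral_const_mul, cos_int]
    rw [Finset.sum_congr rfl h2, Finset.sum_eq_single k]
    · rw [if_pos rfl]
      have h3 : ((-t:ℝ))^k * (-t)^k = t^k * t^k := by rw [← mul_pow, ← mul_pow, neg_mul_neg]
      linear_combination ((n.choose k:ℝ))^2 * (1-t)^(n-k) * (1-t)^(n-k) * Real.pi * h3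
    · intro j _ hj; rw [if_neg (Ne.symm hj), mul_zero]
    · intro h; exact absurd hk h
  rw [Finset.sum_congr rfl h1, ← Finset.sum_mul]
  ring

lemma subst_lemma (n : ℕ) (c : ℝ) :
    ∫ x in (0:ℝ)..1, (x + (1-x)*c^2)^n / Real.sqrt (x*(1-x))
      = ∫ θ in (0:ℝ)..(Real.pi/2), 2*((Real.sin θ)^2 + c^2 * (Real.cos θ)^2)^n := by
  have hpi2 : (0:ℝ) < Real.pi/2 := by positivity
  set g : ℝ → ℝ := fun x => (x + (1-x)*c^2)^n / Real.sqrt (x*(1-x)) with hg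
  have himg : (fun θ => (Real.sin θ)^2) '' Ioo 0 (Real.pi/2) = Ioo (0:ℝ) 1 := by
    ext x
    constructor
    · rintro ⟨θ, ⟨h0, h1⟩, rfl⟩
      have hs : 0 < Real.sin θ := Real.sin_pos_of_pos_of_lt_pi h0 (by linarith [Real.pi_pos])
      have hs1 : Real.sin θ < 1 := by
        have := Real.strictMonoOn_sin ⟨by linarith, le_of_lt h1⟩
          ⟨by linarith [Real.pi_pos], le_refl _⟩ h1
        simpa using this
      exact ⟨by positivity, by simp only; nlinarith⟩
    · rintro ⟨hx0, hx1⟩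
      refine ⟨Real.arcsin (Real.sqrt x), ⟨?_, ?_⟩, ?_⟩
      · exact Real.arcsin_pos.mpr (Real.sqrt_pos.mpr hx0)
      · exact Real.arcsin_lt_pi_div_two.mpr (by
          have : Real.sqrt x < 1 := by
            rw [show (1:ℝ) = Real.sqrt 1 by simp]
            exact Real.sqrt_lt_sqrt (le_of_lt hx0) hx1
          linarith)
      · simp only
        rw [Real.sin_arcsin (by linarith [Real.sqrt_nonneg x]) (Real.sqrt_le_one.mpr (le_of_lt hx1))]
        exact Real.sq_sqrt (le_of_lt hx0)
  have hderiv : ∀ θ ∈ Ioo (0:ℝ) (Real.pi/2),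
      HasDerivWithinAt (fun θ => (Real.sin θ)^2) (2 * Real.sin θ * Real.cos θ)
        (Ioo (0:ℝ) (Real.pi/2)) θ := by
    intro θ _
    have := ((Real.hasDerivAt_sin θ).fun_pow 2).hasDerivWithinAt
      (s := Ioo (0:ℝ) (Real.pi/2))
    simpa using this
  have hinj : InjOn (fun θ => (Real.sin θ)^2) (Ioo 0 (Real.pi/2)) := by
    intro x ⟨hx0, hx1⟩ y ⟨hy0, hy1⟩ hxy
    simp only at hxy
    have hsx : 0 < Real.sin x := Real.sin_pos_of_pos_of_lt_pi hx0 (by linarith [Real.pi_pos])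
    have hsy : 0 < Real.sin y := Real.sin_pos_of_pos_of_lt_pi hy0 (by linarith [Real.pi_pos])
    have hsse : Real.sin x = Real.sin y := by nlinarith
    exact Real.injOn_sin ⟨by linarith, by linarith⟩ ⟨by linarith, by linarith⟩ hsse
  have key := integral_image_eq_integral_abs_deriv_smul measurableSet_Ioo hderiv hinj g
  rw [himg] at key
  rw [intervalIntegral.integral_of_le (by norm_num : (0:ℝ) ≤ 1),
    MeasureTheory.integral_Ioc_eq_integral_Ioo, key,
    intervalIntegral.integral_of_le (le_of_lt hpi2),
    MeasureTheory.integral_Ioc_eq_integral_Ioo]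
  refine MeasureTheory.setIntegral_congr_fun measurableSet_Ioo ?_
  intro θ ⟨h0, h1⟩
  have hs : 0 < Real.sin θ := Real.sin_pos_of_pos_of_lt_pi h0 (by linarith [Real.pi_pos])
  have hc : 0 < Real.cos θ := Real.cos_pos_of_mem_Ioo ⟨by linarith, h1⟩
  have hcs : 1 - (Real.sin θ)^2 = (Real.cos θ)^2 := by
    have := Real.sin_sq_add_cos_sq θ; linarith
  have hsqrt : Real.sqrt ((Real.sin θ)^2 * (1 - (Real.sin θ)^2)) = Real.sin θ * Real.cos θ := by
    rw [hcs, show (Real.sin θ)^2 * (Real.cos θ)^2 = (Real.sin θ * Real.cos θ)^2 by ring,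
      Real.sqrt_sq (by positivity)]
  simp only [hg, smul_eq_mul]
  rw [hsqrt, hcs, abs_of_pos (by positivity : (0:ℝ) < 2 * Real.sin θ * Real.cos θ)]
  have hne : Real.sin θ * Real.cos θ ≠ 0 := by positivity
  field_simp


theorem stmt_11 (n : ℕ) (hn : 1 ≤ n) (t : ℝ) (ht : t ∈ Set.Icc (0:ℝ) 1) :
    ∑ k ∈ Finset.range (n + 1), ((n.choose k : ℝ) * t ^ k * (1 - t) ^ (n - k)) ^ 2 =
      (1 / Real.pi) * ∫ x in (0:ℝ)..1,
        (x + (1 - x) * (1 - 2 * t) ^ 2) ^ n / Real.sqrt (x * (1 - x)) := by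
  have htrig : ∀ θ : ℝ, (Real.sin θ)^2 + (1-2*t)^2 * (Real.cos θ)^2
      = (t^2 + (1-t)^2) - 2*t*(1-t)*Real.cos (2*θ) := by
    intro θ
    rw [Real.cos_two_mul]
    linear_combination Real.sin_sq_add_cos_sq θ
  have h2 : (∫ θ in (0:ℝ)..(Real.pi/2), 2*((t^2 + (1-t)^2) - 2*t*(1-t)*Real.cos (2*θ))^n)
      = ∫ u in (0:ℝ)..Real.pi, ((t^2 + (1-t)^2) - 2*t*(1-t)*Real.cos u)^n := by
    rw [intervalIntegral.integral_const_mul]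
    rw [intervalIntegral.integral_comp_mul_left
      (fun u => ((t^2 + (1-t)^2) - 2*t*(1-t)*Real.cos u)^n) (two_ne_zero)]
    rw [mul_zero, show (2:ℝ) * (Real.pi/2) = Real.pi by ring, smul_eq_mul]
    ring
  rw [subst_lemma n (1-2*t)]
  simp_rw [htrig]
  rw [h2, int_pi n t, one_div, ← mul_assoc, inv_mul_cancel₀ Real.pi_ne_zero, one_mul]
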